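/- arXiv:1305.3903 — 5 statements merged into one kernel-verified Lean document; each statement's English description precedes it below -/
import Mathlib

section
/- Every semigroup identity satisfied by the monoid of n×n tropical matrices is balanced: let n ≥ 1 and let u, v be nonempty lists over Fin k (words in k variables). If for every assignment φ : Fin k → Matrix (Fin n) (Fin n) 𝕋 the tropical matrix products (u.map φ).prod and (v.map φ).prod are equal, then for every variable i ∈ Fin k the number of occurrences of i in u equals the number of occurrences of i in v. -/
/-- The max-plus tropical semiring `𝕋 = ℝ ∪ {-∞}`, realized as `Tropical (WithTop ℝᵒᵈ)`:
tropical addition is `max`, tropical multiplication is `+`, and `⊤` corresponds to `-∞`. -/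
abbrev Trop : Type := Tropical (WithTop ℝᵒᵈ)

/-- Embedding of `ℝ` into `Trop` as tropical units. -/
noncomputable def TropE (x : ℝ) : Trop :=
  Tropical.trop ((OrderDual.toDual x : ℝᵒᵈ) : WithTop ℝᵒᵈ)

lemma tropE_mul (x y : ℝ) : TropE x * TropE y = TropE (x + y) := by simp [TropE]

lemma tropE_one : TropE 0 = 1 := by simp [TropE]

lemma tropE_injective : Function.Injective TropE := fun x y h =>
  OrderDual.toDual.injective (WithTop.coe_injective (Tropical.trop_injective h))

lemma trop_prod_indicator {k : ℕ} (i : Fin k) (l : List (Fin k)) :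
    (l.map fun j => TropE (if j = i then (1:ℝ) else 0)).prod
      = TropE (l.count i : ℝ) := by
  induction l with
  | nil => simp [tropE_one]
  | cons a l ih =>
      rw [List.map_cons, List.prod_cons, ih, tropE_mul, List.count_cons]
      by_cases ha : a = i <;> simp [ha, add_comm]

/-- every semigroup identity satisfied by the monoid of `n × n` tropical
matrices (`n ≥ 1`) is balanced: each variable occurs the same number of times on both
sides. -/
theorem tropical_matrix_identity_balanced {n k : ℕ} (hn : 1 ≤ n)
    (u v : List (Fin k)) (hu : u ≠ []) (hv : v ≠ [])
    (h : ∀ φ : Fin k → Matrix (Fin n) (Fin n) Trop, (u.map φ).prod = (v.map φ).prod) :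
    ∀ i : Fin k, u.count i = v.count i := by
  have : Nonempty (Fin n) := ⟨⟨0, hn⟩⟩
  have key : ∀ t : Fin k → Trop, (u.map t).prod = (v.map t).prod := by
    intro t
    have h2 := h fun j => Matrix.scalar (Fin n) (t j)
    rw [show (u.map fun j => Matrix.scalar (Fin n) (t j))
          = (u.map t).map (Matrix.scalar (Fin n)) by simp [List.map_map],
        show (v.map fun j => Matrix.scalar (Fin n) (t j))
          = (v.map t).map (Matrix.scalar (Fin n)) by simp [List.map_map],
        ← map_list_prod, ← map_list_prod] at h2
    exact Matrix.scalar_inj.mp h2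
  intro i
  have k2 := key fun j => TropE (if j = i then (1:ℝ) else 0)
  rw [trop_prod_indicator, trop_prod_indicator] at k2
  exact_mod_cast tropE_injective k2
end

section
/- Let X and Y be 2×2 upper triangular tropical matrices that are diagonally equivalent (X₁₁ = Y₁₁ and X₂₂ = Y₂₂). Then X·Y·X·X·Y = X·Y·Y·X·Y, i.e., setting M = X·Y one has M·X·M = M·Y·M. -/
lemma trop_add_le_left (x y : Trop) : x + y ≤ x := by
  rcases le_total x y with h | h
  · rw [Tropical.add_eq_left h]
  · rw [Tropical.add_eq_right h]; exact h

lemma trop_add_le_right (x y : Trop) : x + y ≤ y := by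
  rw [add_comm]; exact trop_add_le_left y x

lemma key (a b c d : Trop) :
    a*a*a*(a*d+b*c) + (a*a*b + (a*d+b*c)*c)*(c*c)
  = a*a*a*(a*d+b*c) + (a*a*d + (a*d+b*c)*c)*(c*c) := by
  have e3 : (a*a*a*(a*d+b*c) + (a*a*b + (a*d+b*c)*c)*(c*c)) + a*a*d*(c*c)
      = (a*a*a*(a*d+b*c) + (a*a*d + (a*d+b*c)*c)*(c*c)) + a*a*b*(c*c) := by ring
  have e1 : (a*a*a*(a*d+b*c) + (a*a*b + (a*d+b*c)*c)*(c*c)) + a*a*d*(c*c)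
      = a*a*a*(a*d+b*c) + (a*a*b + (a*d+b*c)*c)*(c*c) := by
    apply Tropical.add_eq_left
    rcases le_total a c with h | h
    · refine le_trans (trop_add_le_left _ _) ?_
      calc a*a*a*(a*d+b*c) ≤ a*a*a*(a*d) := mul_le_mul' le_rfl (trop_add_le_left _ _)
        _ = a*a*d*(a*a) := by ring
        _ ≤ a*a*d*(c*c) := mul_le_mul' le_rfl (mul_le_mul' h h)
    · refine le_trans (trop_add_le_right _ _) ?_
      calc (a*a*b + (a*d+b*c)*c)*(c*c) ≤ ((a*d+b*c)*c)*(c*c) :=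
            mul_le_mul' (trop_add_le_right _ _) le_rfl
        _ ≤ ((a*d)*c)*(c*c) := mul_le_mul' (mul_le_mul' (trop_add_le_left _ _) le_rfl) le_rfl
        _ = a*d*(c*c)*c := by ring
        _ ≤ a*d*(c*c)*a := mul_le_mul' le_rfl h
        _ = a*a*d*(c*c) := by ring
  have e2 : (a*a*a*(a*d+b*c) + (a*a*d + (a*d+b*c)*c)*(c*c)) + a*a*b*(c*c)
      = a*a*a*(a*d+b*c) + (a*a*d + (a*d+b*c)*c)*(c*c) := by
    apply Tropical.add_eq_left
    rcases le_total a c with h | h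
    · refine le_trans (trop_add_le_left _ _) ?_
      calc a*a*a*(a*d+b*c) ≤ a*a*a*(b*c) := mul_le_mul' le_rfl (trop_add_le_right _ _)
        _ = a*a*b*(c*a) := by ring
        _ ≤ a*a*b*(c*c) := mul_le_mul' le_rfl (mul_le_mul' le_rfl h)
    · refine le_trans (trop_add_le_right _ _) ?_
      calc (a*a*d + (a*d+b*c)*c)*(c*c) ≤ ((a*d+b*c)*c)*(c*c) :=
            mul_le_mul' (trop_add_le_right _ _) le_rfl
        _ ≤ ((b*c)*c)*(c*c) := mul_le_mul' (mul_le_mul' (trop_add_le_right _ _) le_rfl) le_rfl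
        _ = b*(c*c)*(c*c) := by ring
        _ ≤ a*a*b*(c*c) := by
            calc b*(c*c)*(c*c) ≤ b*(c*c)*(a*a) := mul_le_mul' le_rfl (mul_le_mul' h h)
              _ = a*a*b*(c*c) := by ring
  rw [← e1, e3, e2]

/-- diagonally equivalent upper triangular `2 × 2` tropical matrices `X`, `Y`
satisfy `XY·X·XY = XY·Y·XY`. -/
theorem two_by_two_diag_equiv_identity (X Y : Matrix (Fin 2) (Fin 2) Trop)
    (hX : ∀ i j : Fin 2, j < i → X i j = 0)
    (hY : ∀ i j : Fin 2, j < i → Y i j = 0)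
    (hdiag : ∀ i : Fin 2, X i i = Y i i) :
    (X * Y) * X * (X * Y) = (X * Y) * Y * (X * Y) := by
  have h1 : X 1 0 = 0 := hX 1 0 (by decide)
  have h2 : Y 1 0 = 0 := hY 1 0 (by decide)
  have h3 := hdiag 0
  have h4 := hdiag 1
  ext i j
  fin_cases i <;> fin_cases j <;>
    simp [Matrix.mul_apply, Fin.sum_univ_two, h1, h2, h3, h4]
  exact key (Y 0 0) (X 0 1) (Y 1 1) (Y 0 1)
end

section
/- For every n ≥ 1, the number of lists over Fin 2 of length n with no triple repeats (i.e., binary words of length n whose exponent set is contained in {1,2}) equals 2 · Fib(n+1), twice the (n+1)-st Fibonacci number (with Fib(0)=0, Fib(1)=1). -/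
namespace NoTriple13

/-- good words: no triple repeats -/
def Good (l : List (Fin 2)) : Prop := ∀ a : Fin 2, ¬ [a, a, a] <:+: l

instance : DecidablePred Good := fun _ => inferInstanceAs (Decidable (∀ _, _))

/-- all binary words of length n -/
def W : ℕ → Finset (List (Fin 2))
  | 0 => {[]}
  | n + 1 => ((Finset.univ : Finset (Fin 2)) ×ˢ W n).image (fun p => p.1 :: p.2)

lemma mem_W : ∀ n l, l ∈ W n ↔ l.length = n := by
  intro n
  induction n with
  | zero => intro l; simp [W, List.length_eq_zero_iff]
  | succ n ih =>
    intro l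
    constructor
    · intro h
      simp only [W, Finset.mem_image] at h
      obtain ⟨p, hp, rfl⟩ := h
      simp only [Finset.mem_product] at hp
      simp [(ih p.2).1 hp.2]
    · intro h
      cases l with
      | nil => simp at h
      | cons a t =>
        simp only [List.length_cons, Nat.add_right_cancel_iff] at h
        simp only [W, Finset.mem_image]
        exact ⟨(a, t), by simp [Finset.mem_product, (ih t).2 h], rfl⟩

def G (n : ℕ) : Finset (List (Fin 2)) := (W n).filter Good

lemma mem_G {n l} : l ∈ G n ↔ l.length = n ∧ Good l := by
  simp [G, Finset.mem_filter, mem_W]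

lemma Good.of_cons {x : Fin 2} {l} (h : Good (x :: l)) : Good l := by
  intro a ha
  exact h a (ha.trans (List.suffix_cons x l).isInfix)

lemma fin2_ne {a b : Fin 2} (h : a ≠ b) : a = 1 - b := by
  revert h; revert a b; decide

lemma fin2_one_sub_ne (x : Fin 2) : 1 - x ≠ x := by revert x; decide

lemma good_cons_of_ne {a b : Fin 2} {l} (hab : a ≠ b) (h : Good (b :: l)) :
    Good (a :: b :: l) := by
  intro c hc
  rw [List.infix_cons_iff] at hc
  rcases hc with hc | hc
  · rw [List.cons_prefix_cons] at hc
    obtain ⟨rfl, hc⟩ := hc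
    rw [List.cons_prefix_cons] at hc
    exact hab hc.1
  · exact h c hc

lemma good_cons_cons_of_ne {a c : Fin 2} {l} (hac : a ≠ c) (h : Good (c :: l)) :
    Good (a :: a :: c :: l) := by
  have h1 : Good (a :: c :: l) := good_cons_of_ne hac h
  intro b hb
  rw [List.infix_cons_iff] at hb
  rcases hb with hb | hb
  · rw [List.cons_prefix_cons] at hb
    obtain ⟨rfl, hb⟩ := hb
    rw [List.cons_prefix_cons] at hb
    obtain ⟨-, hb⟩ := hb
    rw [List.cons_prefix_cons] at hb
    exact hac hb.1
  · exact h1 b hb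

lemma ne_of_good {a c : Fin 2} {l} (h : Good (a :: a :: c :: l)) : a ≠ c := by
  rintro rfl
  exact h a ⟨[], l, rfl⟩

def f₁ (l : List (Fin 2)) : List (Fin 2) := (1 - l.headI) :: l
def f₂ (l : List (Fin 2)) : List (Fin 2) := (1 - l.headI) :: (1 - l.headI) :: l

lemma f₁_inj : Function.Injective f₁ := by
  intro x y h
  simpa [f₁] using congrArg List.tail h

lemma f₂_inj : Function.Injective f₂ := by
  intro x y h
  simpa [f₂] using congrArg (fun l => List.tail (List.tail l)) h

lemma G_succ_succ (n : ℕ) (hn : 1 ≤ n) :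
    G (n + 2) = (G (n + 1)).image f₁ ∪ (G n).image f₂ := by
  ext w
  constructor
  · intro hw
    obtain ⟨hlen, hgood⟩ := mem_G.1 hw
    match w with
    | [] => simp at hlen
    | [_] => simp at hlen
    | [_, _] => simp at hlen; omega
    | a :: b :: c :: t =>
      simp only [List.length_cons] at hlen
      have hlen' : t.length = n - 1 := by omega
      by_cases hab : a = b
      · subst hab
        have hac : a ≠ c := ne_of_good hgood
        refine Finset.mem_union_right _ (Finset.mem_image.2 ⟨c :: t, ?_, ?_⟩)
        · exact mem_G.2 ⟨by simp; omega, hgood.of_cons.of_cons⟩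
        · simp [f₂, ← fin2_ne hac]
      · refine Finset.mem_union_left _ (Finset.mem_image.2 ⟨b :: c :: t, ?_, ?_⟩)
        · exact mem_G.2 ⟨by simp; omega, hgood.of_cons⟩
        · simp [f₁, ← fin2_ne hab]
  · intro hw
    rcases Finset.mem_union.1 hw with h | h
    · obtain ⟨l, hl, rfl⟩ := Finset.mem_image.1 h
      obtain ⟨hlen, hgood⟩ := mem_G.1 hl
      match l, hlen with
      | x :: t, hlen =>
        refine mem_G.2 ⟨by simp [f₁] at hlen ⊢; omega, ?_⟩
        exact good_cons_of_ne (fin2_one_sub_ne x) hgood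
    · obtain ⟨l, hl, rfl⟩ := Finset.mem_image.1 h
      obtain ⟨hlen, hgood⟩ := mem_G.1 hl
      match l, hlen, hn with
      | x :: t, hlen, hn =>
        refine mem_G.2 ⟨by simp [f₂] at hlen ⊢; omega, ?_⟩
        exact good_cons_cons_of_ne (fin2_one_sub_ne x) hgood

lemma G_disj (n : ℕ) : Disjoint ((G (n + 1)).image f₁) ((G n).image f₂) := by
  rw [Finset.disjoint_left]
  intro w h1 h2
  obtain ⟨l₁, hl₁, rfl⟩ := Finset.mem_image.1 h1
  obtain ⟨l₂, hl₂, heq⟩ := Finset.mem_image.1 h2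
  obtain ⟨hlen₁, -⟩ := mem_G.1 hl₁
  match l₁, hlen₁ with
  | x :: t, _ =>
    simp only [f₁, f₂, List.headI, List.cons.injEq] at heq
    obtain ⟨h1', h2', -⟩ := heq
    exact absurd (h2'.symm.trans h1') (Ne.symm (fin2_one_sub_ne x))

lemma card_G_rec (n : ℕ) (hn : 1 ≤ n) :
    (G (n + 2)).card = (G (n + 1)).card + (G n).card := by
  rw [G_succ_succ n hn, Finset.card_union_of_disjoint (G_disj n),
    Finset.card_image_of_injective _ f₁_inj, Finset.card_image_of_injective _ f₂_inj]

lemma card_G_one : (G 1).card = 2 := by decide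
lemma card_G_two : (G 2).card = 4 := by decide

lemma card_G (n : ℕ) (hn : 1 ≤ n) : (G n).card = 2 * Nat.fib (n + 1) := by
  obtain ⟨m, rfl⟩ := Nat.exists_eq_add_of_le hn
  clear hn
  induction m using Nat.strong_induction_on with
  | _ m ih =>
    match m with
    | 0 => simpa using card_G_one
    | 1 => rw [card_G_two]; decide
    | (k + 2) =>
      have h1 := ih (k + 1) (by omega)
      have h0 := ih k (by omega)
      have := card_G_rec (1 + k) (by omega)
      have e1 : 1 + k + 2 = 1 + (k + 2) := by ring
      have e2 : 1 + k + 1 = 1 + (k + 1) := by ring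
      rw [e1, e2] at this
      rw [this, h1, h0]
      have : 1 + (k + 2) + 1 = (1 + k + 1) + 2 := by ring
      rw [this, Nat.fib_add_two]
      ring_nf

end NoTriple13

/-- for `n ≥ 1`, the number of binary words of length `n` with no triple
repeats (exponent set contained in `{1,2}`) is `2 · Fib (n+1)`. -/
theorem card_no_triple_repeat_words (n : ℕ) (hn : 1 ≤ n) :
    Nat.card {l : List (Fin 2) // l.length = n ∧ ∀ a : Fin 2, ¬ [a, a, a] <:+: l} =
      2 * Nat.fib (n + 1) := by
  have hset : {l : List (Fin 2) | l.length = n ∧ ∀ a : Fin 2, ¬ [a, a, a] <:+: l} =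
      ↑(NoTriple13.G n) := by
    ext l
    simp [NoTriple13.mem_G, NoTriple13.Good]
  calc Nat.card {l : List (Fin 2) // l.length = n ∧ ∀ a : Fin 2, ¬ [a, a, a] <:+: l}
      = {l : List (Fin 2) | l.length = n ∧ ∀ a : Fin 2, ¬ [a, a, a] <:+: l}.ncard :=
        (Nat.card_coe_set_eq _)
    _ = (NoTriple13.G n).card := by rw [hset, Set.ncard_coe_finset]
    _ = 2 * Nat.fib (n + 1) := NoTriple13.card_G n hn
end

section
/- For every n ≥ 1 there exists a list w over Fin 2 with no triple repeats such that every list u over Fin 2 of length n with no triple repeats is an infix of w, and moreover w has length at most 2·(n+1)·Fib(n+1), where Fib is the Fibonacci sequence (Fib(0)=0, Fib(1)=1). (This gives an upper bound, via the Fibonacci number formula, on the length of n-power words and hence of the resulting 2-variable semigroup identities.) -/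
/-- `NT w`: the word `w` has no triple repeats. -/
def NT (w : List (Fin 2)) : Prop := ∀ a : Fin 2, ¬ [a, a, a] <:+: w

lemma NT_nil : NT [] := by intro a h; simp [List.infix_nil] at h

lemma NT_of_infix {u v : List (Fin 2)} (h : u <:+: v) (hv : NT v) : NT u :=
  fun a ha => hv a (ha.trans h)

lemma NT_singleton (c : Fin 2) : NT [c] := by
  intro a h
  have := h.length_le
  simp at this

lemma fin2_flip_ne : ∀ c : Fin 2, c + 1 ≠ c := by decide

lemma fin2_ne_iff : ∀ a b : Fin 2, a ≠ b → a = b + 1 := by decide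

/-- Gluing lemma: appending two no-triple words whose last/first letters differ
gives a no-triple word. -/
lemma nt_append : ∀ (x : List (Fin 2)) {y : List (Fin 2)}, NT x → NT y →
    (∀ c d : Fin 2, x.getLast? = some c → y.head? = some d → c ≠ d) → NT (x ++ y)
  | [], y, _, hy, _ => by simpa using hy
  | c :: xs, y, hx, hy, h => by
    intro a ha
    rw [List.cons_append, List.infix_cons_iff] at ha
    rcases ha with hpre | hinf
    · obtain ⟨t, ht⟩ := hpre
      simp only [List.cons_append, List.cons.injEq] at ht
      obtain ⟨rfl, ht⟩ := ht
      match xs, ht with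
      | [], ht =>
        simp only [List.nil_append] at ht
        exact h a a rfl (by rw [← ht]; rfl) rfl
      | [e], ht =>
        simp only [List.cons_append, List.nil_append, List.cons.injEq] at ht
        obtain ⟨rfl, ht⟩ := ht
        exact h a a rfl (by rw [← ht]; rfl) rfl
      | e :: f :: xs', ht =>
        simp only [List.cons_append, List.cons.injEq] at ht
        obtain ⟨rfl, rfl, _⟩ := ht
        exact hx a ⟨[], xs', rfl⟩
    · refine nt_append xs (NT_of_infix (List.infix_cons (List.infix_refl xs)) hx) hy ?_ a hinf
      intro c' d' hc' hd'
      match xs, hc' with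
      | e :: xs', hc' =>
        exact h c' d' (by rw [List.getLast?_cons_cons]; exact hc') hd'

/-- Recursive enumeration of all no-triple words of length `n` starting with letter `a`. -/
def D : ℕ → Fin 2 → List (List (Fin 2))
  | 0, _ => [[]]
  | 1, a => [[a]]
  | (n+2), a => (D (n+1) (a+1)).map (a :: ·) ++ (D n (a+1)).map (fun l => a :: a :: l)

lemma D_length : ∀ n a, (D n a).length = Nat.fib (n + 1)
  | 0, _ => by simp [D]
  | 1, _ => by simp [D]
  | (n+2), a => by
    simp [D, D_length (n+1), D_length n, Nat.fib_add_two]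
    ring

lemma D_spec : ∀ n a, ∀ w ∈ D n a, w.length = n ∧ NT w ∧ (n ≠ 0 → w.head? = some a)
  | 0, a, w, hw => by
    simp [D] at hw
    subst hw
    exact ⟨rfl, NT_nil, by simp⟩
  | 1, a, w, hw => by
    simp [D] at hw
    subst hw
    exact ⟨rfl, NT_singleton a, fun _ => rfl⟩
  | (n+2), a, w, hw => by
    simp only [D, List.mem_append, List.mem_map] at hw
    rcases hw with ⟨w', hw', rfl⟩ | ⟨w', hw', rfl⟩
    · obtain ⟨hlen, hnt, hhd⟩ := D_spec (n+1) (a+1) w' hw'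
      have hhd' := hhd (by omega)
      refine ⟨by simp [hlen], ?_, fun _ => rfl⟩
      intro b hb
      rw [List.infix_cons_iff] at hb
      rcases hb with hpre | hinf
      · obtain ⟨t, ht⟩ := hpre
        simp only [List.cons_append, List.nil_append, List.cons.injEq] at ht
        obtain ⟨rfl, ht⟩ := ht
        rw [← ht] at hhd'
        simp only [List.head?_cons, Option.some.injEq] at hhd'
        exact fin2_flip_ne b hhd'.symm
      · exact hnt b hinf
    · obtain ⟨hlen, hnt, hhd⟩ := D_spec n (a+1) w' hw'
      refine ⟨by simp [hlen], ?_, fun _ => rfl⟩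
      have hkey : ∀ t : List (Fin 2), a :: t ≠ w' := by
        intro t ht
        match n, hlen with
        | 0, hlen => rw [← ht] at hlen; simp at hlen
        | (m+1), hlen =>
          have h2 := hhd (by omega)
          rw [← ht] at h2
          simp only [List.head?_cons, Option.some.injEq] at h2
          exact fin2_flip_ne a h2.symm
      intro b hb
      rw [List.infix_cons_iff] at hb
      rcases hb with hpre | hinf
      · obtain ⟨t, ht⟩ := hpre
        simp only [List.cons_append, List.nil_append, List.cons.injEq] at ht
        obtain ⟨rfl, ht, ht'⟩ := ht
        exact hkey t (by rw [← ht]; exact ht')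
      · rw [List.infix_cons_iff] at hinf
        rcases hinf with hpre | hinf
        · obtain ⟨t, ht⟩ := hpre
          simp only [List.cons_append, List.nil_append, List.cons.injEq] at ht
          obtain ⟨rfl, ht⟩ := ht
          exact hkey (b :: t) ht
        · exact hnt b hinf

lemma D_complete : ∀ n (u : List (Fin 2)) (a : Fin 2), u.length = n → NT u →
    u.head? = some a → u ∈ D n a
  | 0, u, a, hlen, _, hhd => by
    rw [List.length_eq_zero_iff] at hlen
    subst hlen; simp at hhd
  | 1, u, a, hlen, _, hhd => by
    match u, hlen with
    | [x], _ =>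
      simp at hhd
      subst hhd
      simp [D]
  | (n+2), u, a, hlen, hnt, hhd => by
    obtain ⟨x, t, rfl⟩ : ∃ x t, u = x :: t :=
      List.exists_cons_of_ne_nil (by rintro rfl; simp at hlen)
    obtain rfl : x = a := by simpa using hhd
    have hntt : NT t := NT_of_infix ⟨[x], [], by simp⟩ hnt
    have hlt : t.length = n + 1 := by simpa using hlen
    obtain ⟨b, t', rfl⟩ : ∃ b t', t = b :: t' :=
      List.exists_cons_of_ne_nil (by rintro rfl; simp at hlt)
    simp only [D, List.mem_append, List.mem_map]
    by_cases hab : b = x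
    · subst hab
      right
      have hlt' : t'.length = n := by simpa using hlt
      have hntt' : NT t' := NT_of_infix ⟨[b], [], by simp⟩ hntt
      match n, hlt' with
      | 0, hlt' =>
        rw [List.length_eq_zero_iff] at hlt'
        subst hlt'
        exact ⟨[], by simp [D], rfl⟩
      | (m+1), hlt' =>
        obtain ⟨c, t'', rfl⟩ : ∃ c t'', t' = c :: t'' :=
          List.exists_cons_of_ne_nil (by rintro rfl; simp at hlt')
        have hcb : c ≠ b := by
          intro h; subst h
          exact hnt c ⟨[], t'', rfl⟩
        have hc : c = b + 1 := fin2_ne_iff c b hcb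
        subst hc
        exact ⟨(b+1) :: t'', D_complete (m+1) _ _ hlt' hntt' rfl, rfl⟩
    · left
      have hb : b = x + 1 := fin2_ne_iff b x hab
      subst hb
      exact ⟨(x+1) :: t', D_complete (n+1) _ _ hlt hntt rfl, rfl⟩

/-- separator between two words -/
def sep (u v : List (Fin 2)) : List (Fin 2) :=
  match u.getLast?, v.head? with
  | some c, some d => if c = d then [c+1] else []
  | _, _ => []

lemma sep_length_le (u v : List (Fin 2)) : (sep u v).length ≤ 1 := by
  unfold sep
  rcases u.getLast? with _ | c <;> rcases v.head? with _ | d <;> simp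
  split <;> simp

/-- join a list of words with separators -/
def joinS : List (List (Fin 2)) → List (Fin 2)
  | [] => []
  | [u] => u
  | u :: v :: r => u ++ sep u v ++ joinS (v :: r)

lemma joinS_length : ∀ l : List (List (Fin 2)),
    (joinS l).length ≤ (l.map List.length).sum + l.length
  | [] => by simp [joinS]
  | [u] => by simp [joinS]
  | u :: v :: r => by
    have h1 := joinS_length (v :: r)
    have h2 := sep_length_le u v
    simp only [joinS, List.length_append, List.map_cons, List.sum_cons, List.length_cons]
    simp only [List.map_cons, List.sum_cons, List.length_cons] at h1
    omega

lemma joinS_mem_infix : ∀ (l : List (List (Fin 2))) (u : List (Fin 2)), u ∈ l → u <:+: joinS l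
  | [], u, hu => by simp at hu
  | [v], u, hu => by
    simp at hu; subst hu; exact List.infix_refl _
  | v :: w :: r, u, hu => by
    rcases List.mem_cons.mp hu with rfl | hu
    · exact ((List.prefix_append u _).trans (List.prefix_append _ _)).isInfix
    · exact (joinS_mem_infix (w :: r) u hu).trans (List.suffix_append _ _).isInfix

lemma joinS_head? : ∀ (v : List (Fin 2)) (r : List (List (Fin 2))), v ≠ [] →
    (joinS (v :: r)).head? = v.head?
  | v, [], _ => rfl
  | c :: v', w :: r, _ => by simp [joinS]

lemma joinS_nt : ∀ l : List (List (Fin 2)), (∀ u ∈ l, NT u ∧ u ≠ []) → NT (joinS l)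
  | [] , _ => NT_nil
  | [u], h => (h u (by simp)).1
  | u :: v :: r, h => by
    have hu := h u (by simp)
    have hv := h v (by simp)
    have hJ : NT (joinS (v :: r)) := joinS_nt (v :: r) (fun w hw => h w (by simp [hw]))
    have hJhd : (joinS (v :: r)).head? = v.head? := joinS_head? v r hv.2
    obtain ⟨c, hc⟩ : ∃ c, u.getLast? = some c := by
      rcases u with _ | ⟨x, xs⟩
      · exact absurd rfl hu.2
      · exact ⟨_, List.getLast?_eq_getLast (by simp)⟩
    obtain ⟨d, hd⟩ : ∃ d, v.head? = some d := by
      rcases v with _ | ⟨x, xs⟩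
      · exact absurd rfl hv.2
      · exact ⟨x, rfl⟩
    show NT (u ++ sep u v ++ joinS (v :: r))
    by_cases hcd : c = d
    · have hsep : sep u v = [c+1] := by unfold sep; rw [hc, hd]; simp [hcd]
      rw [hsep]
      have h1 : NT (u ++ [c+1]) := by
        refine nt_append u hu.1 (NT_singleton _) ?_
        intro c' d' hc' hd'
        rw [hc] at hc'
        simp at hc' hd'
        subst hc'; subst hd'
        exact (fin2_flip_ne c ·.symm)
      refine nt_append (u ++ [c+1]) h1 hJ ?_
      intro c' d' hc' hd'
      rw [List.getLast?_append_cons] at hc'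
      rw [hJhd, hd] at hd'
      obtain rfl : c + 1 = c' := Option.some_injective _ hc'
      obtain rfl : d = d' := Option.some_injective _ hd'
      rw [hcd]
      exact fin2_flip_ne d
    · have hsep : sep u v = [] := by unfold sep; rw [hc, hd]; simp [hcd]
      rw [hsep, List.append_nil]
      refine nt_append u hu.1 hJ ?_
      intro c' d' hc' hd'
      rw [hc] at hc'
      rw [hJhd, hd] at hd'
      simp at hc' hd'
      subst hc'; subst hd'
      exact hcd

lemma sum_map_length (n : ℕ) : ∀ l : List (List (Fin 2)), (∀ u ∈ l, u.length = n) →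
    (l.map List.length).sum = n * l.length
  | [], _ => by simp
  | u :: r, h => by
    simp only [List.map_cons, List.sum_cons, List.length_cons,
      sum_map_length n r (fun w hw => h w (by simp [hw])), h u (by simp)]
    ring

/-- for every `n ≥ 1` there is an `n`-power word `w` over two letters with
powers `{1,2}` (a word with no triple repeats containing every length-`n` no-triple-repeats
word as an infix) of length at most `2·(n+1)·Fib (n+1)`. -/
theorem exists_power_word_length_le (n : ℕ) (hn : 1 ≤ n) :
    ∃ w : List (Fin 2),
      (∀ a : Fin 2, ¬ [a, a, a] <:+: w) ∧
      (∀ u : List (Fin 2), u.length = n → (∀ a : Fin 2, ¬ [a, a, a] <:+: u) → u <:+: w) ∧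
      w.length ≤ 2 * (n + 1) * Nat.fib (n + 1) := by
  set L : List (List (Fin 2)) := D n 0 ++ D n 1 with hL
  have hLmem : ∀ u ∈ L, u.length = n ∧ NT u := by
    intro u hu
    rcases List.mem_append.mp hu with h | h
    · exact ⟨(D_spec n 0 u h).1, (D_spec n 0 u h).2.1⟩
    · exact ⟨(D_spec n 1 u h).1, (D_spec n 1 u h).2.1⟩
  refine ⟨joinS L, ?_, ?_, ?_⟩
  · exact joinS_nt L (fun u hu => ⟨(hLmem u hu).2, by
      intro h; subst h; have := (hLmem [] hu).1; simp at this; omega⟩)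
  · intro u hulen hunt
    have hune : u ≠ [] := by intro h; subst h; simp at hulen; omega
    obtain ⟨a, t, rfl⟩ := List.exists_cons_of_ne_nil hune
    have huL : a :: t ∈ L := by
      fin_cases a
      · exact List.mem_append.mpr (Or.inl (D_complete n _ 0 hulen hunt rfl))
      · exact List.mem_append.mpr (Or.inr (D_complete n _ 1 hulen hunt rfl))
    exact joinS_mem_infix L _ huL
  · have h1 := joinS_length L
    have h2 : (L.map List.length).sum = n * L.length :=
      sum_map_length n L (fun u hu => (hLmem u hu).1)
    have h3 : L.length = 2 * Nat.fib (n + 1) := by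
      simp [hL, D_length]; ring
    rw [h2, h3] at h1
    calc (joinS L).length ≤ n * (2 * Nat.fib (n+1)) + 2 * Nat.fib (n+1) := h1
      _ = 2 * (n + 1) * Nat.fib (n + 1) := by ring
end

section
/- The word xyxy²x²y is a minimal 3-power word: every list over Fin 2 of length 3 with no triple repeats (namely the six lists corresponding to x²y, xyx, xy², yx², yxy, y²x) is an infix of the list [0,1,0,1,1,0,0,1], and no list over Fin 2 of length strictly less than 8 contains every such length-3 list as an infix. -/
private lemma aux_decide :
    ∀ a b c : Fin 2, (∀ x : Fin 2, ¬ [x, x, x] <:+: [a, b, c]) →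
      [a, b, c] <:+: ([0, 1, 0, 1, 1, 0, 0, 1] : List (Fin 2)) := by decide

private def P (w : List (Fin 2)) : Prop :=
  ([0,0,1] : List (Fin 2)) <:+: w ∧ ([0,1,0] : List (Fin 2)) <:+: w ∧
  ([0,1,1] : List (Fin 2)) <:+: w ∧ ([1,0,0] : List (Fin 2)) <:+: w ∧
  ([1,0,1] : List (Fin 2)) <:+: w ∧ ([1,1,0] : List (Fin 2)) <:+: w

private instance : DecidablePred P := fun w => by unfold P; infer_instance

set_option maxRecDepth 4000 in
private lemma aux_short : ∀ n : Fin 8, ∀ f : Fin n → Fin 2, ¬ P (List.ofFn f) := by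
  decide

/-- `xyxy²x²y`, i.e. `[0,1,0,1,1,0,0,1]`, is a minimal 3-power word: every
binary word of length 3 with no triple repeats is an infix of it, and no word of length
`< 8` contains all such length-3 words as infixes. -/
theorem minimal_three_power_word :
    (∀ u : List (Fin 2), u.length = 3 → (∀ a : Fin 2, ¬ [a, a, a] <:+: u) →
      u <:+: ([0, 1, 0, 1, 1, 0, 0, 1] : List (Fin 2))) ∧
    (∀ w : List (Fin 2),
      (∀ u : List (Fin 2), u.length = 3 → (∀ a : Fin 2, ¬ [a, a, a] <:+: u) → u <:+: w) →
      8 ≤ w.length) := by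
  constructor
  · intro u hu h
    match u, hu with
    | [a, b, c], _ => exact aux_decide a b c h
  · intro w hw
    by_contra h
    push_neg at h
    have hP : P w := by
      refine ⟨?_, ?_, ?_, ?_, ?_, ?_⟩ <;> exact hw _ rfl (by decide)
    have := aux_short ⟨w.length, h⟩ w.get
    rw [List.ofFn_get] at this
    exact this hP
end
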